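/- arXiv:2111.02471 — 2 statements merged into one kernel-verified Lean document; each statement's English description precedes it below -/
import Mathlib

section
/- Let (G, w) be an edge-weighted simple graph on a finite type V and let v ∈ V. Then the restriction map φ : S_G → S_{G_v}, φ(g) = g restricted to V \ {v}, is a well-defined surjective ℤ-module homomorphism, and its kernel is exactly { g ∈ S_G : g(u) = 0 for all u ≠ v }. -/
/-- An integer spline on the edge-weighted graph `(G, w)`: a vertex labeling `g : V → ℤ` such
that for every edge `{u, x}` of `G`, the weight `w {u, x}` divides `g u - g x` in `ℤ`. -/
def IsSpline {V : Type*} (G : SimpleGraph V) (w : Sym2 V → ℕ) (g : V → ℤ) : Prop :=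
  ∀ u x : V, G.Adj u x → (w s(u, x) : ℤ) ∣ g u - g x

/-- The ℤ-module of integer splines on `(G, w)`, as a submodule of `V → ℤ`. -/
def splineSubmodule {V : Type*} (G : SimpleGraph V) (w : Sym2 V → ℕ) :
    Submodule ℤ (V → ℤ) where
  carrier := {g | IsSpline G w g}
  add_mem' := by
    intro a b ha hb u x hux
    simpa [sub_add_sub_comm] using dvd_add (ha u x hux) (hb u x hux)
  zero_mem' := by intro u x hux; simp
  smul_mem' := by
    intro c g hg u x hux
    simpa [mul_sub] using (hg u x hux).mul_left c

/-- The star-clique operation at `v`: delete `v` and all edges at `v`, and join every pair of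
distinct former neighbors of `v` by an edge (keeping all edges of `G` not incident to `v`). -/
def starClique {V : Type*} (G : SimpleGraph V) (v : V) :
    SimpleGraph {u : V // u ≠ v} where
  Adj u x := u ≠ x ∧ (G.Adj ↑u ↑x ∨ (G.Adj ↑u v ∧ G.Adj ↑x v))
  symm := ⟨by
    rintro u x ⟨h1, h2⟩
    refine ⟨h1.symm, ?_⟩
    rcases h2 with h | ⟨ha, hb⟩
    · exact Or.inl h.symm
    · exact Or.inr ⟨hb, ha⟩⟩
  loopless := ⟨fun u h => h.1 rfl⟩

instance {V : Type*} [DecidableEq V] (G : SimpleGraph V) [DecidableRel G.Adj] (v : V) :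
    DecidableRel (starClique G v).Adj :=
  fun u x => decidable_of_iff (u ≠ x ∧ (G.Adj ↑u ↑x ∨ (G.Adj ↑u v ∧ G.Adj ↑x v))) Iff.rfl

/-- The edge weights of the collapsed graph `(G_v, w_v)`: for distinct `u, x ≠ v`, the weight is
`w {u, x}` if `u, x` are adjacent in `G` but not both adjacent to `v`;
`gcd (w {u, v}) (w {x, v})` if `u, x` are not adjacent in `G` but both adjacent to `v`; and
`lcm (w {u, x}) (gcd (w {u, v}) (w {x, v}))` if both. -/
def collapseWeight {V : Type*} (G : SimpleGraph V) [DecidableRel G.Adj]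
    (w : Sym2 V → ℕ) (v : V) : Sym2 {u : V // u ≠ v} → ℕ :=
  Sym2.lift ⟨fun u x =>
    if G.Adj ↑u ↑x then
      if G.Adj ↑u v ∧ G.Adj ↑x v then
        Nat.lcm (w s(↑u, ↑x)) (Nat.gcd (w s(↑u, v)) (w s(↑x, v)))
      else w s(↑u, ↑x)
    else Nat.gcd (w s(↑u, v)) (w s(↑x, v)),
    by
      intro u x
      have hadj : G.Adj (↑u : V) ↑x ↔ G.Adj (↑x : V) ↑u := G.adj_comm _ _
      have hs : s((↑u : V), (↑x : V)) = s((↑x : V), (↑u : V)) := Sym2.eq_swap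
      have hg : Nat.gcd (w s((↑u : V), v)) (w s((↑x : V), v)) =
          Nat.gcd (w s((↑x : V), v)) (w s((↑u : V), v)) := Nat.gcd_comm _ _
      have ha : (G.Adj (↑u : V) v ∧ G.Adj (↑x : V) v) ↔ (G.Adj (↑x : V) v ∧ G.Adj (↑u : V) v) :=
        and_comm
      dsimp only
      by_cases h1 : G.Adj (↑u : V) ↑x
      · by_cases h2 : G.Adj (↑u : V) v ∧ G.Adj (↑x : V) v
        · rw [if_pos h1, if_pos (hadj.mp h1), if_pos h2, if_pos (ha.mp h2), hs, hg]
        · rw [if_pos h1, if_pos (hadj.mp h1), if_neg h2, if_neg (fun hc => h2 (ha.mpr hc)), hs]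
      · rw [if_neg h1, if_neg (fun hc => h1 (hadj.mpr hc)), hg]⟩


section CrtHelpers

private lemma int_natLcm_dvd' {a b : ℕ} {z : ℤ} (ha : (a:ℤ) ∣ z) (hb : (b:ℤ) ∣ z) :
    (Nat.lcm a b : ℤ) ∣ z := by
  rw [Int.natCast_dvd] at ha hb ⊢
  exact Nat.lcm_dvd ha hb

private lemma gcd_lcm_distrib_dvd' {a b c : ℕ} (ha : a ≠ 0) (hb : b ≠ 0) :
    Nat.gcd (Nat.lcm a b) c ∣ Nat.lcm (Nat.gcd a c) (Nat.gcd b c) := by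
  rcases Nat.eq_zero_or_pos c with rfl | hc
  · simp
  have hc' : c ≠ 0 := hc.ne'
  have hlcm : Nat.lcm a b ≠ 0 := Nat.lcm_ne_zero ha hb
  have h1 : Nat.gcd (Nat.lcm a b) c ≠ 0 := Nat.gcd_ne_zero_left hlcm
  have h2 : Nat.lcm (Nat.gcd a c) (Nat.gcd b c) ≠ 0 :=
    Nat.lcm_ne_zero (Nat.gcd_ne_zero_left ha) (Nat.gcd_ne_zero_left hb)
  rw [← Nat.factorization_le_iff_dvd h1 h2, Nat.factorization_gcd hlcm hc',
    Nat.factorization_lcm ha hb,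
    Nat.factorization_lcm (Nat.gcd_ne_zero_left ha) (Nat.gcd_ne_zero_left hb),
    Nat.factorization_gcd ha hc', Nat.factorization_gcd hb hc']
  intro p
  simp only [Finsupp.inf_apply, Finsupp.sup_apply]
  exact le_of_eq (inf_sup_right _ _ _)

private lemma gcd_finsetLcm_dvd' {V : Type*} [DecidableEq V] (n : V → ℕ) (c : ℕ) (d : ℤ)
    (S : Finset V) (hpos : ∀ u ∈ S, n u ≠ 0)
    (h : ∀ u ∈ S, (Nat.gcd (n u) c : ℤ) ∣ d) :
    (Nat.gcd (S.lcm n) c : ℤ) ∣ d := by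
  induction S using Finset.induction_on with
  | empty => simp
  | @insert a S ha ih =>
    have hL : S.lcm n ≠ 0 := by
      rw [Ne, Finset.lcm_eq_zero_iff]
      rintro ⟨u, hu, h0⟩
      exact hpos u (Finset.mem_insert_of_mem hu) h0
    have hlcm : (insert a S).lcm n = Nat.lcm (n a) (S.lcm n) := Finset.lcm_insert
    rw [hlcm]
    have h1 := gcd_lcm_distrib_dvd' (c := c) (hpos a (Finset.mem_insert_self a S)) hL
    have h2 : (Nat.lcm (Nat.gcd (n a) c) (Nat.gcd (S.lcm n) c) : ℤ) ∣ d :=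
      int_natLcm_dvd' (h a (Finset.mem_insert_self a S))
        (ih (fun u hu => hpos u (Finset.mem_insert_of_mem hu))
            (fun u hu => h u (Finset.mem_insert_of_mem hu)))
    exact dvd_trans (Int.natCast_dvd_natCast.mpr h1) h2

private lemma exists_mul_sub_dvd' {m n : ℕ} {c : ℤ} (h : (Nat.gcd m n : ℤ) ∣ c) :
    ∃ k : ℤ, (n:ℤ) ∣ (m:ℤ) * k - c := by
  obtain ⟨q, hq⟩ := h
  refine ⟨q * Nat.gcdA m n, ⟨-(q * Nat.gcdB m n), ?_⟩⟩
  rw [hq, Nat.gcd_eq_gcd_ab m n]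
  ring

private lemma crt_finset' {V : Type*} [DecidableEq V] (n : V → ℕ) (r : V → ℤ) (S : Finset V)
    (hpos : ∀ u ∈ S, n u ≠ 0)
    (hcompat : ∀ u ∈ S, ∀ x ∈ S, (Nat.gcd (n u) (n x) : ℤ) ∣ r u - r x) :
    ∃ z : ℤ, ∀ u ∈ S, (n u : ℤ) ∣ z - r u := by
  induction S using Finset.induction_on with
  | empty => exact ⟨0, fun u hu => absurd hu (Finset.notMem_empty u)⟩
  | @insert a S ha ih =>
    obtain ⟨z0, hz0⟩ := ih (fun u hu => hpos u (Finset.mem_insert_of_mem hu))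
      (fun u hu x hx => hcompat u (Finset.mem_insert_of_mem hu) x (Finset.mem_insert_of_mem hx))
    have hgd : (Nat.gcd (S.lcm n) (n a) : ℤ) ∣ r a - z0 := by
      apply gcd_finsetLcm_dvd' n (n a) _ S (fun u hu => hpos u (Finset.mem_insert_of_mem hu))
      intro u hu
      have h1 : (Nat.gcd (n u) (n a) : ℤ) ∣ z0 - r u :=
        dvd_trans (Int.natCast_dvd_natCast.mpr (Nat.gcd_dvd_left _ _)) (hz0 u hu)
      have h2 := hcompat u (Finset.mem_insert_of_mem hu) a (Finset.mem_insert_self a S)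
      have h4 : (Nat.gcd (n u) (n a) : ℤ) ∣ z0 - r a := by
        simpa using dvd_add h1 h2
      simpa [neg_sub] using dvd_neg.mpr h4
    obtain ⟨k, hk⟩ := exists_mul_sub_dvd' hgd
    refine ⟨z0 + ((S.lcm n : ℕ) : ℤ) * k, ?_⟩
    intro u hu
    rcases Finset.mem_insert.mp hu with rfl | hu'
    · have heq : z0 + ((S.lcm n : ℕ) : ℤ) * k - r u =
          ((S.lcm n : ℕ) : ℤ) * k - (r u - z0) := by ring
      rw [heq]
      exact hk
    · have hd1 : (n u : ℤ) ∣ z0 - r u := hz0 u hu'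
      have hd2 : (n u : ℤ) ∣ ((S.lcm n : ℕ) : ℤ) * k :=
        Dvd.dvd.mul_right (Int.natCast_dvd_natCast.mpr (Finset.dvd_lcm hu')) k
      have heq : z0 + ((S.lcm n : ℕ) : ℤ) * k - r u =
          (z0 - r u) + ((S.lcm n : ℕ) : ℤ) * k := by ring
      rw [heq]
      exact dvd_add hd1 hd2

private lemma restrict_isSpline' {V : Type*} (G : SimpleGraph V) [DecidableRel G.Adj]
    (w : Sym2 V → ℕ) (v : V) {g : V → ℤ} (hg : IsSpline G w g) :
    IsSpline (starClique G v) (collapseWeight G w v) (fun u => g ↑u) := by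
  rintro u x ⟨hne, hadj⟩
  have hgcd : ∀ (_ : G.Adj ↑u v) (_ : G.Adj ↑x v),
      (Nat.gcd (w s(↑u, v)) (w s(↑x, v)) : ℤ) ∣ g ↑u - g ↑x := by
    intro hu hx
    have d1 : (Nat.gcd (w s(↑u, v)) (w s(↑x, v)) : ℤ) ∣ g ↑u - g v :=
      dvd_trans (Int.natCast_dvd_natCast.mpr (Nat.gcd_dvd_left _ _)) (hg ↑u v hu)
    have d2 : (Nat.gcd (w s(↑u, v)) (w s(↑x, v)) : ℤ) ∣ g ↑x - g v :=
      dvd_trans (Int.natCast_dvd_natCast.mpr (Nat.gcd_dvd_right _ _)) (hg ↑x v hx)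
    simpa using dvd_sub d1 d2
  by_cases h1 : G.Adj ↑u ↑x
  · by_cases h2 : G.Adj ↑u v ∧ G.Adj ↑x v
    · have hval : collapseWeight G w v s(u, x) =
          Nat.lcm (w s(↑u, ↑x)) (Nat.gcd (w s(↑u, v)) (w s(↑x, v))) := by
        simp [collapseWeight, h1, h2]
      rw [hval]
      exact int_natLcm_dvd' (hg ↑u ↑x h1) (hgcd h2.1 h2.2)
    · have hval : collapseWeight G w v s(u, x) = w s(↑u, ↑x) := by
        simp [collapseWeight, h1, h2]
      rw [hval]
      exact hg ↑u ↑x h1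
  · rcases hadj with h | h
    · exact absurd h h1
    · have hval : collapseWeight G w v s(u, x) =
          Nat.gcd (w s(↑u, v)) (w s(↑x, v)) := by
        simp [collapseWeight, h1]
      rw [hval]
      exact hgcd h.1 h.2

end CrtHelpers

/-- The restriction map `φ : S_G → S_{G_v}`, `φ g = g|_{V \ {v}}`, is a well-defined surjective
ℤ-module homomorphism whose kernel is `{ g ∈ S_G : g u = 0 for all u ≠ v }`. -/
theorem restriction_surjective_linearMap {V : Type*} [Fintype V] [DecidableEq V]
    (G : SimpleGraph V) [DecidableRel G.Adj] (w : Sym2 V → ℕ)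
    (hw : ∀ e ∈ G.edgeSet, 0 < w e) (v : V) :
    ∃ φ : splineSubmodule G w →ₗ[ℤ]
        splineSubmodule (starClique G v) (collapseWeight G w v),
      (∀ g : splineSubmodule G w, ∀ u : {u : V // u ≠ v},
        ((φ g : {u : V // u ≠ v} → ℤ) u = (g : V → ℤ) ↑u)) ∧
      Function.Surjective φ ∧
      (∀ g : splineSubmodule G w, φ g = 0 ↔ ∀ u : V, u ≠ v → (g : V → ℤ) u = 0) := by
  classical
  refine ⟨{ toFun := fun g => ⟨fun u => (g : V → ℤ) ↑u, restrict_isSpline' G w v g.2⟩,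
            map_add' := fun a b => rfl,
            map_smul' := fun c a => rfl }, fun g u => rfl, ?_, ?_⟩
  · -- surjectivity
    rintro ⟨g0, hg0⟩
    have hg0' : IsSpline (starClique G v) (collapseWeight G w v) g0 := hg0
    set n : V → ℕ := fun u => w s(u, v) with hn
    set r : V → ℤ := fun u => if hu : u = v then 0 else g0 ⟨u, hu⟩ with hr
    have hpos : ∀ u ∈ G.neighborFinset v, n u ≠ 0 := by
      intro u hu
      rw [SimpleGraph.mem_neighborFinset] at hu
      have hmem : s(u, v) ∈ G.edgeSet := by
        rw [SimpleGraph.mem_edgeSet]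
        exact hu.symm
      exact (hw _ hmem).ne'
    have hcompat : ∀ u ∈ G.neighborFinset v, ∀ x ∈ G.neighborFinset v,
        (Nat.gcd (n u) (n x) : ℤ) ∣ r u - r x := by
      intro u hu x hx
      rw [SimpleGraph.mem_neighborFinset] at hu hx
      by_cases hux : u = x
      · subst hux; simp
      have hadj : (starClique G v).Adj ⟨u, hu.ne'⟩ ⟨x, hx.ne'⟩ :=
        ⟨fun hc => hux (congrArg Subtype.val hc), Or.inr ⟨hu.symm, hx.symm⟩⟩
      have hd := hg0' _ _ hadj
      have hgcddvd : Nat.gcd (w s(u, v)) (w s(x, v)) ∣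
          collapseWeight G w v s(⟨u, hu.ne'⟩, ⟨x, hx.ne'⟩) := by
        by_cases h1 : G.Adj u x
        · have hval : collapseWeight G w v s(⟨u, hu.ne'⟩, ⟨x, hx.ne'⟩) =
              Nat.lcm (w s(u, x)) (Nat.gcd (w s(u, v)) (w s(x, v))) := by
            simp [collapseWeight, h1, hu.symm, hx.symm]
          rw [hval]
          exact Nat.dvd_lcm_right _ _
        · have hval : collapseWeight G w v s(⟨u, hu.ne'⟩, ⟨x, hx.ne'⟩) =
              Nat.gcd (w s(u, v)) (w s(x, v)) := by
            simp [collapseWeight, h1]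
          rw [hval]
      have hreq : r u - r x = g0 ⟨u, hu.ne'⟩ - g0 ⟨x, hx.ne'⟩ := by
        simp [hr, hu.ne', hx.ne']
      rw [hreq]
      exact dvd_trans (Int.natCast_dvd_natCast.mpr hgcddvd) hd
    obtain ⟨z, hz⟩ := crt_finset' n r (G.neighborFinset v) hpos hcompat
    set g : V → ℤ := fun u => if hu : u = v then z else g0 ⟨u, hu⟩ with hgdef
    have hsp : IsSpline G w g := by
      intro a b hab
      by_cases ha : a = v
      · rw [ha] at hab ⊢
        have hb : b ≠ v := fun hc => G.irrefl (hc ▸ hab)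
        have hbmem : b ∈ G.neighborFinset v := by
          rw [SimpleGraph.mem_neighborFinset]; exact hab
        have hdvd := hz b hbmem
        have hrb : r b = g0 ⟨b, hb⟩ := by simp [hr, hb]
        rw [hrb] at hdvd
        have hval : g v - g b = z - g0 ⟨b, hb⟩ := by simp [hgdef, hb]
        rw [show s(v, b) = s(b, v) from Sym2.eq_swap, hval]
        exact hdvd
      · by_cases hb : b = v
        · rw [hb] at hab ⊢
          have hamem : a ∈ G.neighborFinset v := by
            rw [SimpleGraph.mem_neighborFinset]; exact hab.symm
          have hdvd := hz a hamem
          have hra : r a = g0 ⟨a, ha⟩ := by simp [hr, ha]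
          rw [hra] at hdvd
          have hval : g a - g v = -(z - g0 ⟨a, ha⟩) := by
            simp [hgdef, ha]
          rw [hval]
          exact dvd_neg.mpr hdvd
        · have hadj : (starClique G v).Adj ⟨a, ha⟩ ⟨b, hb⟩ :=
            ⟨fun hc => hab.ne (congrArg Subtype.val hc), Or.inl hab⟩
          have hd := hg0' _ _ hadj
          have hwdvd : w s(a, b) ∣ collapseWeight G w v s(⟨a, ha⟩, ⟨b, hb⟩) := by
            by_cases h2 : G.Adj a v ∧ G.Adj b v
            · have hval : collapseWeight G w v s(⟨a, ha⟩, ⟨b, hb⟩) =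
                  Nat.lcm (w s(a, b)) (Nat.gcd (w s(a, v)) (w s(b, v))) := by
                simp [collapseWeight, hab, h2]
              rw [hval]
              exact Nat.dvd_lcm_left _ _
            · have hval : collapseWeight G w v s(⟨a, ha⟩, ⟨b, hb⟩) = w s(a, b) := by
                simp [collapseWeight, hab, h2]
              rw [hval]
          have hval : g a - g b = g0 ⟨a, ha⟩ - g0 ⟨b, hb⟩ := by
            simp [hgdef, ha, hb]
          rw [hval]
          exact dvd_trans (Int.natCast_dvd_natCast.mpr hwdvd) hd
    refine ⟨⟨g, hsp⟩, ?_⟩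
    apply Subtype.ext
    funext u
    show g ↑u = g0 u
    simp [hgdef, u.2]
  · -- kernel
    intro g
    constructor
    · intro h u hu
      have hc := congrArg
        (fun f : splineSubmodule (starClique G v) (collapseWeight G w v) =>
          (f : {u : V // u ≠ v} → ℤ) ⟨u, hu⟩) h
      simpa using hc
    · intro h
      apply Subtype.ext
      funext u
      simpa using h ↑u u.2
end

section
/- Let (G, w) be an edge-weighted simple graph on vertices enumerated v_1, …, v_n, let v = v_n, and let φ : S_G → S_{G_v} be the restriction map g ↦ g|_{V \ {v_n}}. Fix 0 ≤ i ≤ n − 2 and let F ∈ F_i. Then F is a minimal element of the flow-up class F_i of S_G if and only if φ(F) is a minimal element of the flow-up class F′_i of S_{G_v}; moreover the leading terms agree: F(v_{i+1}) = (φ(F))(v_{i+1}). -/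
/-- `F` is a minimal element of the flow-up class determined by the set `low` of earlier
vertices and the leading vertex `vi`: `F` is a spline vanishing on `low` with `F vi ≠ 0`,
its leading term `F vi` is positive, and `F vi ≤ |g vi|` for every member `g` of the class. -/
def MinimalInFlowup {V : Type*} (G : SimpleGraph V) (w : Sym2 V → ℕ)
    (low : Set V) (vi : V) (F : V → ℤ) : Prop :=
  (IsSpline G w F ∧ (∀ u ∈ low, F u = 0) ∧ F vi ≠ 0) ∧
  0 < F vi ∧
  ∀ g : V → ℤ, IsSpline G w g → (∀ u ∈ low, g u = 0) → g vi ≠ 0 → F vi ≤ |g vi|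



/-- Two-congruence CRT over ℤ. -/
lemma crt_two (m n : ℕ) (a b : ℤ) (h : (Nat.gcd m n : ℤ) ∣ a - b) :
    ∃ x : ℤ, (m : ℤ) ∣ x - a ∧ (n : ℤ) ∣ x - b := by
  obtain ⟨k, hk⟩ := h
  have hb : (Nat.gcd m n : ℤ) = m * Int.gcdA m n + n * Int.gcdB m n := by
    have := Int.gcd_eq_gcd_ab (m : ℤ) (n : ℤ)
    simpa using this
  refine ⟨a - m * Int.gcdA m n * k, ⟨-(Int.gcdA m n * k), by ring⟩,
    ⟨Int.gcdB m n * k, ?_⟩⟩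
  linear_combination hk + k * hb

/-- Hard direction of gcd-lcm distributivity in ℕ, as a divisibility. -/
lemma gcd_lcm_dvd (a b k : ℕ) :
    Nat.gcd (Nat.lcm a b) k ∣ Nat.lcm (Nat.gcd a k) (Nat.gcd b k) := by
  rcases eq_or_ne a 0 with rfl | ha
  · simp only [Nat.lcm_zero_left, Nat.gcd_zero_left]
    exact Nat.dvd_lcm_left _ _
  rcases eq_or_ne b 0 with rfl | hb
  · simp only [Nat.lcm_zero_right, Nat.gcd_zero_left]
    exact Nat.dvd_lcm_right _ _
  rcases eq_or_ne k 0 with rfl | hk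
  · simp only [Nat.gcd_zero_right]
    exact dvd_rfl
  have hl : Nat.lcm a b ≠ 0 := Nat.lcm_ne_zero ha hb
  have hgl : Nat.gcd (Nat.lcm a b) k ≠ 0 := Nat.gcd_ne_zero_right hk
  have hga : Nat.gcd a k ≠ 0 := Nat.gcd_ne_zero_right hk
  have hgb : Nat.gcd b k ≠ 0 := Nat.gcd_ne_zero_right hk
  have hll : Nat.lcm (Nat.gcd a k) (Nat.gcd b k) ≠ 0 := Nat.lcm_ne_zero hga hgb
  rw [← Nat.factorization_le_iff_dvd hgl hll]
  rw [Nat.factorization_gcd hl hk, Nat.factorization_lcm ha hb,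
    Nat.factorization_lcm hga hgb, Nat.factorization_gcd ha hk,
    Nat.factorization_gcd hb hk]
  intro p
  simp only [Finsupp.inf_apply, Finsupp.sup_apply]
  exact le_of_eq (min_max_distrib_right _ _ _)

/-- Cast finset lcm divisibility to ℤ. -/
lemma cast_lcm_dvd {ι : Type*} (s : Finset ι) (f : ι → ℕ) (d : ℤ)
    (h : ∀ u ∈ s, (f u : ℤ) ∣ d) : (Nat.cast (s.lcm f) : ℤ) ∣ d := by
  classical
  induction s using Finset.induction_on with
  | empty => simp
  | @insert u s' hu ih =>
    rw [Finset.lcm_insert]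
    have h1 : (f u : ℤ) ∣ d := h u (Finset.mem_insert_self _ _)
    have h2 : (Nat.cast (s'.lcm f) : ℤ) ∣ d := ih fun x hx => h x (Finset.mem_insert_of_mem hx)
    have h3 : (Int.lcm ((f u : ℕ) : ℤ) (Nat.cast (s'.lcm f) : ℤ) : ℤ) ∣ d := Int.coe_lcm_dvd h1 h2
    simpa [Int.lcm, Int.natAbs_natCast, lcm] using h3

/-- Distributivity over finset lcm, one direction. -/
lemma gcd_finset_lcm_dvd {ι : Type*} (s : Finset ι) (m : ι → ℕ) (k : ℕ) :
    Nat.gcd (s.lcm m) k ∣ s.lcm (fun u => Nat.gcd (m u) k) := by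
  classical
  induction s using Finset.induction_on with
  | empty => simp
  | @insert u s' hu ih =>
    rw [Finset.lcm_insert, Finset.lcm_insert]
    calc Nat.gcd (lcm (m u) (s'.lcm m)) k
        ∣ Nat.lcm (Nat.gcd (m u) k) (Nat.gcd (s'.lcm m) k) := gcd_lcm_dvd _ _ _
      _ ∣ _ := lcm_dvd_lcm dvd_rfl ih

/-- Finset CRT with pairwise compatibility. -/
lemma finset_crt {ι : Type*} (s : Finset ι) (m : ι → ℕ) (a : ι → ℤ)
    (h : ∀ u ∈ s, ∀ x ∈ s, (Nat.gcd (m u) (m x) : ℤ) ∣ a u - a x) :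
    ∃ z : ℤ, ∀ u ∈ s, (m u : ℤ) ∣ z - a u := by
  classical
  induction s using Finset.induction_on with
  | empty => exact ⟨0, by simp⟩
  | @insert u₀ s' hu0 ih =>
    obtain ⟨z₀, hz₀⟩ := ih fun u hu x hx =>
      h u (Finset.mem_insert_of_mem hu) x (Finset.mem_insert_of_mem hx)
    have key : (Nat.cast (Nat.gcd (s'.lcm m) (m u₀)) : ℤ) ∣ z₀ - a u₀ := by
      have h1 : (Nat.cast (s'.lcm (fun u => Nat.gcd (m u) (m u₀))) : ℤ) ∣ z₀ - a u₀ := by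
        apply cast_lcm_dvd
        intro u hus
        have hg1 : (Nat.cast (Nat.gcd (m u) (m u₀)) : ℤ) ∣ z₀ - a u :=
          dvd_trans (Int.natCast_dvd_natCast.mpr (Nat.gcd_dvd_left _ _)) (hz₀ u hus)
        have hg2 : (Nat.cast (Nat.gcd (m u) (m u₀)) : ℤ) ∣ a u - a u₀ :=
          h u (Finset.mem_insert_of_mem hus) u₀ (Finset.mem_insert_self _ _)
        simpa using dvd_add hg1 hg2
      exact dvd_trans (Int.natCast_dvd_natCast.mpr (gcd_finset_lcm_dvd s' m (m u₀))) h1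
    obtain ⟨z, hz1, hz2⟩ := crt_two (s'.lcm m) (m u₀) z₀ (a u₀) key
    refine ⟨z, ?_⟩
    intro u hus
    rcases Finset.mem_insert.mp hus with rfl | hus'
    · exact hz2
    · have hmL : (Nat.cast (m u) : ℤ) ∣ z - z₀ :=
        dvd_trans (Int.natCast_dvd_natCast.mpr (Finset.dvd_lcm hus')) hz1
      simpa using dvd_add hmL (hz₀ u hus')

section SplineLemmas

variable {V : Type*} [DecidableEq V]
set_option linter.unusedSectionVars false

lemma collapseWeight_mk (G : SimpleGraph V) [DecidableRel G.Adj] (w : Sym2 V → ℕ) (v : V)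
    (u x : {u : V // u ≠ v}) :
    collapseWeight G w v s(u, x) =
      if G.Adj ↑u ↑x then
        if G.Adj ↑u v ∧ G.Adj ↑x v then
          Nat.lcm (w s(↑u, ↑x)) (Nat.gcd (w s(↑u, v)) (w s(↑x, v)))
        else w s(↑u, ↑x)
      else Nat.gcd (w s(↑u, v)) (w s(↑x, v)) := rfl

lemma gcd_dvd_sub (G : SimpleGraph V) (w : Sym2 V → ℕ) (F : V → ℤ)
    (hF : IsSpline G w F) {u x v : V} (hu : G.Adj u v) (hx : G.Adj x v) :
    (Nat.gcd (w s(u, v)) (w s(x, v)) : ℤ) ∣ F u - F x := by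
  have h1 : (Nat.gcd (w s(u, v)) (w s(x, v)) : ℤ) ∣ F u - F v :=
    dvd_trans (Int.natCast_dvd_natCast.mpr (Nat.gcd_dvd_left _ _)) (hF u v hu)
  have h2 : (Nat.gcd (w s(u, v)) (w s(x, v)) : ℤ) ∣ F x - F v :=
    dvd_trans (Int.natCast_dvd_natCast.mpr (Nat.gcd_dvd_right _ _)) (hF x v hx)
  simpa using dvd_sub h1 h2

lemma restrict_spline (G : SimpleGraph V) [DecidableRel G.Adj] (w : Sym2 V → ℕ) (v : V)
    (F : V → ℤ) (hF : IsSpline G w F) :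
    IsSpline (starClique G v) (collapseWeight G w v) (fun u => F ↑u) := by
  rintro u x ⟨hne, hor⟩
  rw [collapseWeight_mk]
  by_cases h1 : G.Adj ↑u ↑x
  · rw [if_pos h1]
    by_cases h2 : G.Adj ↑u v ∧ G.Adj ↑x v
    · rw [if_pos h2]
      have hA : (w s((↑u : V), ↑x) : ℤ) ∣ F ↑u - F ↑x := hF ↑u ↑x h1
      have hB : (Nat.gcd (w s((↑u : V), v)) (w s((↑x : V), v)) : ℤ) ∣ F ↑u - F ↑x :=
        gcd_dvd_sub G w F hF h2.1 h2.2
      have h3 : (Int.lcm ((w s((↑u : V), ↑x) : ℕ) : ℤ)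
          (Nat.cast (Nat.gcd (w s((↑u : V), v)) (w s((↑x : V), v))) : ℤ) : ℤ) ∣ F ↑u - F ↑x :=
        Int.coe_lcm_dvd hA hB
      simpa [Int.lcm, Int.natAbs_natCast] using h3
    · rw [if_neg h2]
      exact hF ↑u ↑x h1
  · rw [if_neg h1]
    rcases hor with h | ⟨ha, hb⟩
    · exact absurd h h1
    · exact gcd_dvd_sub G w F hF ha hb

lemma extend_spline [Fintype V] (G : SimpleGraph V) [DecidableRel G.Adj]
    (w : Sym2 V → ℕ) (v : V) (g' : {u : V // u ≠ v} → ℤ)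
    (hg' : IsSpline (starClique G v) (collapseWeight G w v) g') :
    ∃ g : V → ℤ, IsSpline G w g ∧ ∀ u : {u : V // u ≠ v}, g ↑u = g' u := by
  classical
  set a : V → ℤ := fun u => if h : u = v then 0 else g' ⟨u, h⟩ with ha
  have hav : ∀ (u : V) (h : u ≠ v), a u = g' ⟨u, h⟩ := by
    intro u h; simp [ha, h]
  set s := G.neighborFinset v with hs
  have hmem : ∀ u ∈ s, G.Adj u v := by
    intro u hu
    exact (G.mem_neighborFinset v u).mp hu |>.symm
  have compat : ∀ u ∈ s, ∀ x ∈ s,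
      (Nat.gcd (w s(u, v)) (w s(x, v)) : ℤ) ∣ a u - a x := by
    intro u hu x hx
    have hu' := hmem u hu
    have hx' := hmem x hx
    have hune : u ≠ v := G.ne_of_adj hu'
    have hxne : x ≠ v := G.ne_of_adj hx'
    rcases eq_or_ne u x with rfl | huxne
    · simp
    · have hadj : (starClique G v).Adj ⟨u, hune⟩ ⟨x, hxne⟩ :=
        ⟨fun hc => huxne (congrArg Subtype.val hc), Or.inr ⟨hu', hx'⟩⟩
      have hd := hg' _ _ hadj
      rw [collapseWeight_mk] at hd
      rw [hav u hune, hav x hxne]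
      by_cases h1 : G.Adj u x
      · rw [if_pos h1, if_pos ⟨hu', hx'⟩] at hd
        exact dvd_trans (Int.natCast_dvd_natCast.mpr (Nat.dvd_lcm_right _ _)) hd
      · rw [if_neg h1] at hd
        exact hd
  obtain ⟨z, hz⟩ := finset_crt s (fun u => w s(u, v)) a compat
  refine ⟨fun u => if u = v then z else a u, ?_, ?_⟩
  · intro p q hpq
    by_cases hp : p = v
    · have hpq' : G.Adj v q := hp ▸ hpq
      have hq : q ≠ v := G.ne_of_adj hpq'.symm
      have hqs : q ∈ s := (G.mem_neighborFinset v q).mpr hpq'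
      simp only [if_pos hp, if_neg hq]
      have hsw : s(p, q) = s(q, v) := by rw [hp, Sym2.eq_swap]
      rw [hsw]
      exact hz q hqs
    · by_cases hq : q = v
      · have hpq' : G.Adj p v := hq ▸ hpq
        have hps : p ∈ s := (G.mem_neighborFinset v p).mpr hpq'.symm
        simp only [if_neg hp, if_pos hq]
        have h4 : (w s(p, v) : ℤ) ∣ -(z - a p) := dvd_neg.mpr (hz p hps)
        have hsw : s(p, q) = s(p, v) := by rw [hq]
        rw [hsw]
        simpa using h4
      · simp only [if_neg hp, if_neg hq]
        have hadj : (starClique G v).Adj ⟨p, hp⟩ ⟨q, hq⟩ :=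
          ⟨fun hc => (G.ne_of_adj hpq) (congrArg Subtype.val hc), Or.inl hpq⟩
        have hd := hg' _ _ hadj
        rw [collapseWeight_mk, if_pos hpq] at hd
        rw [hav p hp, hav q hq]
        by_cases h2 : G.Adj p v ∧ G.Adj q v
        · rw [if_pos h2] at hd
          exact dvd_trans (Int.natCast_dvd_natCast.mpr (Nat.dvd_lcm_left _ _)) hd
        · rw [if_neg h2] at hd
          exact hd
  · intro u
    simp only [if_neg u.2]
    exact hav ↑u u.2

end SplineLemmas

set_option maxHeartbeats 2000000 in
/-- Let `φ : S_G → S_{G_v}` be restriction at `v = v_{n+1} = Fin.last n`, and let `F` lie in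
the flow-up class `F_i` of `S_G` (`0 ≤ i ≤ (n+1) - 2`).  Then `F` is a minimal element of `F_i`
iff `φ F` is a minimal element of the flow-up class `F'_i` of `S_{G_v}`, and the leading terms
agree: `F v_{i+1} = (φ F) v_{i+1}`. -/
theorem restriction_minimal_iff (n : ℕ) (hn : 1 ≤ n) (G : SimpleGraph (Fin (n + 1)))
    [DecidableRel G.Adj] (w : Sym2 (Fin (n + 1)) → ℕ) (hw : ∀ e ∈ G.edgeSet, 0 < w e)
    (i : ℕ) (hi : i ≤ n - 1)
    (F : Fin (n + 1) → ℤ) (hF : IsSpline G w F)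
    (hFzero : ∀ j : Fin (n + 1), (j : ℕ) < i → F j = 0)
    (hFne : F ⟨i, by omega⟩ ≠ 0) :
    F ⟨i, by omega⟩ =
      (fun u : {u : Fin (n + 1) // u ≠ Fin.last n} => F ↑u)
        ⟨⟨i, by omega⟩, by simp [Fin.ext_iff]; omega⟩ ∧
    (MinimalInFlowup G w {j : Fin (n + 1) | (j : ℕ) < i} ⟨i, by omega⟩ F ↔
      MinimalInFlowup (starClique G (Fin.last n)) (collapseWeight G w (Fin.last n))
        {u : {u : Fin (n + 1) // u ≠ Fin.last n} | ((u : Fin (n + 1)) : ℕ) < i}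
        ⟨⟨i, by omega⟩, by simp [Fin.ext_iff]; omega⟩
        (fun u : {u : Fin (n + 1) // u ≠ Fin.last n} => F ↑u)) := by
  have hin : i < n := by omega
  refine ⟨rfl, ?_⟩
  constructor
  · rintro ⟨⟨hspl, hlow, hne⟩, hpos, hminim⟩
    refine ⟨⟨restrict_spline G w (Fin.last n) F hspl, fun u hu => hlow ↑u hu, hne⟩,
      hpos, ?_⟩
    intro g' hg'spl hg'low hg'ne
    obtain ⟨g, hgspl, hgres⟩ := extend_spline G w (Fin.last n) g' hg'spl
    have h1 : ∀ j ∈ {j : Fin (n + 1) | (j : ℕ) < i}, g j = 0 := by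
      intro j hj
      have hjlt : (j : ℕ) < i := hj
      have hjne : j ≠ Fin.last n := by
        simp only [ne_eq, Fin.ext_iff, Fin.val_last]
        omega
      rw [hgres ⟨j, hjne⟩]
      exact hg'low ⟨j, hjne⟩ hjlt
    have hkey : g ⟨i, by omega⟩ =
        g' ⟨⟨i, by omega⟩, by simp only [ne_eq, Fin.ext_iff, Fin.val_last]; omega⟩ :=
      hgres ⟨⟨i, by omega⟩, by simp only [ne_eq, Fin.ext_iff, Fin.val_last]; omega⟩
    have h2 : g ⟨i, by omega⟩ ≠ 0 := by rw [hkey]; exact hg'ne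
    calc F ⟨i, by omega⟩ ≤ |g ⟨i, by omega⟩| := hminim g hgspl h1 h2
      _ = _ := by rw [hkey]
  · rintro ⟨⟨_, _, _⟩, hpos', hminim'⟩
    refine ⟨⟨hF, fun j hj => hFzero j hj, hFne⟩, hpos', ?_⟩
    intro g hgspl hglow hgne
    exact hminim' (fun u => g ↑u) (restrict_spline G w (Fin.last n) g hgspl)
      (fun u hu => hglow ↑u hu) hgne
end
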